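/- If α is a hinge angle, then at least one of cos α and sin α is irrational. -/

import Mathlib

lemma hinge_key (x y d p q k : ℤ) (hd : d ≠ 0)
    (h1 : x ^ 2 + y ^ 2 = d ^ 2)
    (h2 : 2 * q * x + 2 * p * y = (2 * k + 1) * d) : False := by
  set g : ℤ := (Int.gcd x y : ℤ) with hgdef
  have hg0 : g ≠ 0 := by
    intro h0
    have hnat : Int.gcd x y = 0 := by rw [hgdef] at h0; exact_mod_cast h0
    obtain ⟨hx0, hy0⟩ := Int.gcd_eq_zero_iff.mp hnat
    rw [hx0, hy0] at h1
    have : d ^ 2 = 0 := by linarith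
    exact hd (by nlinarith)
  have hx : g ∣ x := Int.gcd_dvd_left x y
  have hy : g ∣ y := Int.gcd_dvd_right x y
  have hd2 : g ^ 2 ∣ d ^ 2 := by
    rw [← h1]
    exact dvd_add (pow_dvd_pow_of_dvd hx 2) (pow_dvd_pow_of_dvd hy 2)
  have hgd : g ∣ d := (Int.pow_dvd_pow_iff two_ne_zero).mp hd2
  obtain ⟨x', hx'⟩ := hx
  obtain ⟨y', hy'⟩ := hy
  obtain ⟨d', hd'⟩ := hgd
  have h1' : x' ^ 2 + y' ^ 2 = d' ^ 2 := by
    have hh : g ^ 2 * (x' ^ 2 + y' ^ 2) = g ^ 2 * (d' ^ 2) := by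
      rw [hx', hy', hd'] at h1; ring_nf at h1 ⊢; linarith
    exact mul_left_cancel₀ (pow_ne_zero 2 hg0) hh
  have h2' : 2 * q * x' + 2 * p * y' = (2 * k + 1) * d' := by
    have hh : g * (2 * q * x' + 2 * p * y') = g * ((2 * k + 1) * d') := by
      rw [hx', hy', hd'] at h2; ring_nf at h2 ⊢; linarith
    exact mul_left_cancel₀ hg0 hh
  have hcop : Int.gcd x' y' = 1 := by
    have hgpos : 0 < Int.gcd x y := by
      rcases Nat.eq_zero_or_pos (Int.gcd x y) with h0 | h0
      · exact absurd (by rw [hgdef]; exact_mod_cast h0 : g = 0) hg0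
      · exact h0
    have hx'' : x' = x / g := by rw [hx', Int.mul_ediv_cancel_left _ hg0]
    have hy'' : y' = y / g := by rw [hy', Int.mul_ediv_cancel_left _ hg0]
    rw [hx'', hy'']
    exact Int.gcd_div_gcd_div_gcd hgpos
  -- d' is odd
  have hodd : ¬ (2 ∣ d') := by
    rintro ⟨e, he⟩
    rcases Int.even_or_odd x' with ⟨m, hm⟩ | ⟨m, hm⟩ <;>
      rcases Int.even_or_odd y' with ⟨n, hn⟩ | ⟨n, hn⟩
    · -- both even : contradicts coprimality
      have h2x : (2:ℤ) ∣ x' := ⟨m, by linarith⟩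
      have h2y : (2:ℤ) ∣ y' := ⟨n, by linarith⟩
      have : (2:ℤ) ∣ (Int.gcd x' y' : ℤ) := Int.dvd_coe_gcd h2x h2y
      rw [hcop] at this
      norm_num at this
    · have h4 : (4:ℤ) ∣ 1 := ⟨e ^ 2 - m ^ 2 - (n ^ 2 + n), by
        rw [hm, hn, he] at h1'; ring_nf at h1' ⊢; linarith⟩
      norm_num at h4
    · have h4 : (4:ℤ) ∣ 1 := ⟨e ^ 2 - n ^ 2 - (m ^ 2 + m), by
        rw [hm, hn, he] at h1'; ring_nf at h1' ⊢; linarith⟩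
      norm_num at h4
    · have h4 : (4:ℤ) ∣ 2 := ⟨e ^ 2 - (m ^ 2 + m + n ^ 2 + n), by
        rw [hm, hn, he] at h1'; ring_nf at h1' ⊢; linarith⟩
      norm_num at h4
  -- final parity contradiction
  rcases Int.even_or_odd d' with ⟨t, ht⟩ | ⟨t, ht⟩
  · exact hodd ⟨t, by linarith⟩
  · have h6 : (2:ℤ) ∣ 1 := ⟨q * x' + p * y' - (2 * k * t + k + t), by
      rw [ht] at h2'; ring_nf at h2' ⊢; linarith⟩
    norm_num at h6

/-- If α is a hinge angle, then cos α or sin α is irrational. -/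
theorem hinge_irrational (α : ℝ)
    (h : ∃ p q k : ℤ,
      2 * (q : ℝ) * Real.cos α + 2 * (p : ℝ) * Real.sin α = 2 * (k : ℝ) + 1) :
    Irrational (Real.cos α) ∨ Irrational (Real.sin α) := by
  by_contra hcon
  push_neg at hcon
  obtain ⟨hc, hs⟩ := hcon
  rw [Irrational] at hc hs
  obtain ⟨a, ha⟩ := not_not.mp hc
  obtain ⟨b, hb⟩ := not_not.mp hs
  obtain ⟨p, q, k, heq⟩ := h
  -- Pythagorean identity in ℚ
  have hpyth : a ^ 2 + b ^ 2 = 1 := by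
    have h0 := Real.sin_sq_add_cos_sq α
    rw [← ha, ← hb] at h0
    have h1 : (a:ℝ) ^ 2 + (b:ℝ) ^ 2 = 1 := by linarith
    exact_mod_cast h1
  have hlin : 2 * (q : ℚ) * a + 2 * (p : ℚ) * b = 2 * (k : ℚ) + 1 := by
    rw [← ha, ← hb] at heq
    exact_mod_cast heq
  -- pass to integers
  set x : ℤ := a.num * b.den with hxdef
  set y : ℤ := b.num * a.den with hydef
  set d : ℤ := (a.den : ℤ) * b.den with hddef
  have hAd : (a.den : ℚ) ≠ 0 := by exact_mod_cast a.den_nz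
  have hBd : (b.den : ℚ) ≠ 0 := by exact_mod_cast b.den_nz
  have hA : ((a.num : ℚ)) = a * a.den := by
    field_simp [Rat.num_div_den]
    exact (Rat.mul_den_eq_num a).symm
  have hB : ((b.num : ℚ)) = b * b.den := by
    field_simp [Rat.num_div_den]
    exact (Rat.mul_den_eq_num b).symm
  have e1 : x ^ 2 + y ^ 2 = d ^ 2 := by
    have : ((x : ℚ)) ^ 2 + (y : ℚ) ^ 2 = (d : ℚ) ^ 2 := by
      push_cast [hxdef, hydef, hddef]
      rw [hA, hB]
      linear_combination ((a.den:ℚ) * (b.den:ℚ))^2 * hpyth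
    exact_mod_cast this
  have e2 : 2 * q * x + 2 * p * y = (2 * k + 1) * d := by
    have : 2 * (q:ℚ) * x + 2 * (p:ℚ) * y = (2 * (k:ℚ) + 1) * d := by
      push_cast [hxdef, hydef, hddef]
      rw [hA, hB]
      linear_combination ((a.den:ℚ) * (b.den:ℚ)) * hlin
    exact_mod_cast this
  have hdne : d ≠ 0 := by
    have h1 : (0:ℤ) < (a.den : ℤ) := by exact_mod_cast a.pos
    have h2 : (0:ℤ) < (b.den : ℤ) := by exact_mod_cast b.pos
    rw [hddef]
    exact ne_of_gt (mul_pos h1 h2)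
  exact hinge_key x y d p q k hdne e1 e2
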